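/- Let G be a finite group. Every element of the subalgebra of class functions generated by the Wedderburn sums {σ_X : X ∈ 𝒴} of a partition 𝒴 of Irr(G) arising from a supercharacter theory lies in the linear span of {σ_Y : Y ∈ 𝒴}. -/

import Mathlib

open scoped Classical

/-- The set of irreducible characters of `G` over `ℂ`. -/
noncomputable def Irr (G : Type) [Group G] [Fintype G] : Set (G → ℂ) :=
  {χ | ∃ V : FDRep ℂ G, CategoryTheory.Simple V ∧ χ = V.character}

/-- The trivial character. -/
noncomputable def triv (G : Type) [Group G] [Fintype G] : G → ℂ := fun _ => 1

/-- The Wedderburn sum `σ_X = ∑_{χ ∈ X} χ(1)·χ`. -/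
noncomputable def wsum {G : Type} [Group G] [Fintype G] (X : Set (G → ℂ)) : G → ℂ :=
  fun g => ∑ᶠ χ ∈ X, χ 1 * χ g

/-- `P` is a partition of the set `S`. -/
def IsPartitionOf {α : Type*} (S : Set α) (P : Set (Set α)) : Prop :=
  (∀ p ∈ P, p.Nonempty ∧ p ⊆ S) ∧ ∀ a ∈ S, ∃! p, p ∈ P ∧ a ∈ p

/-- A partial partition of `Irr G`: nonempty pairwise disjoint subsets of `Irr G`. -/
def IsPartialPartition (G : Type) [Group G] [Fintype G] (P : Set (Set (G → ℂ))) : Prop :=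
  (∀ p ∈ P, p.Nonempty ∧ p ⊆ Irr G) ∧ ∀ p ∈ P, ∀ q ∈ P, p ≠ q → p ∩ q = ∅

/-- A supercharacter theory of `G` in the sense of Diaconis–Isaacs: `Y` partitions
`Irr G`, `K` partitions `G` with `{1} ∈ K`, `|Y| = |K|`, and every Wedderburn sum
`σ_X`, `X ∈ Y`, is constant on every member of `K`. -/
def IsSCT (G : Type) [Group G] [Fintype G] (Y : Set (Set (G → ℂ))) (K : Set (Set G)) : Prop :=
  IsPartitionOf (Irr G) Y ∧ IsPartitionOf (Set.univ : Set G) K ∧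
    ({(1 : G)} : Set G) ∈ K ∧ Y.ncard = K.ncard ∧
    ∀ X ∈ Y, ∀ k ∈ K, ∀ g ∈ k, ∀ h ∈ k, wsum X g = wsum X h

/-- The coefficient of `χ(1)·χ` in the expansion of the class function `a` in the
orthogonal basis `{φ(1)·φ : φ ∈ Irr G}` of `cf(G)`. -/
noncomputable def coeff {G : Type} [Group G] [Fintype G] (χ a : G → ℂ) : ℂ :=
  (∑ g : G, starRingEnd ℂ (χ g) * a g) / ((Fintype.card G : ℂ) * χ 1)

/-- The (non-unital) subalgebra of `cf(G)` generated by the Wedderburn sums of `𝒳`. -/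
noncomputable def wAlg (G : Type) [Group G] [Fintype G] (𝒳 : Set (Set (G → ℂ))) :
    NonUnitalSubalgebra ℂ (G → ℂ) :=
  NonUnitalAlgebra.adjoin ℂ {s | ∃ X ∈ 𝒳, s = wsum X}

/-- The equivalence relation defining the filtration `ℱ(𝒳)`: `χ ∼ ψ` iff the
coefficients of `χ(1)χ` and `ψ(1)ψ` agree in every element of the algebra `𝒜`. -/
def frel (G : Type) [Group G] [Fintype G] (𝒳 : Set (Set (G → ℂ))) (χ ψ : G → ℂ) : Prop :=
  ∀ a ∈ wAlg G 𝒳, coeff χ a = coeff ψ a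

/-- The filtration `ℱ(𝒳)`: the partition of `Irr G` into equivalence classes of `frel`. -/
def Filt (G : Type) [Group G] [Fintype G] (𝒳 : Set (Set (G → ℂ))) : Set (Set (G → ℂ)) :=
  {C | ∃ χ ∈ Irr G, C = {ψ ∈ Irr G | frel G 𝒳 χ ψ}}


section Aux
variable {G : Type} [Group G] [Fintype G]

/-- The convolution-style pairing used for orthogonality. -/
noncomputable def pairB (f h : G → ℂ) : ℂ := ∑ g : G, f g * h g⁻¹

lemma char_orth (V W : FDRep ℂ G) [CategoryTheory.Simple V] [CategoryTheory.Simple W] :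
    pairB V.character W.character =
      if Nonempty (V ≅ W) then (Fintype.card G : ℂ) else 0 := by
  haveI inst : Invertible (Fintype.card G : ℂ) :=
    invertibleOfNonzero (by exact_mod_cast Fintype.card_ne_zero)
  have h : ⅟ (Fintype.card G : ℂ) • ∑ g : G, V.character g * W.character g⁻¹ =
      if Nonempty (V ≅ W) then (1 : ℂ) else 0 := by
    haveI : Invertible (Nat.card G : ℂ) := by rw [Nat.card_eq_fintype_card]; exact inst
    have := FDRep.char_orthonormal V W
    rw [Nat.card_eq_fintype_card] at this
    rw [invOf_eq_inv, smul_eq_mul]; exact_mod_cast this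
  have h2 : pairB V.character W.character =
      (Fintype.card G : ℂ) * (⅟ (Fintype.card G : ℂ) •
        ∑ g : G, V.character g * W.character g⁻¹) := by
    rw [smul_eq_mul, ← mul_assoc, mul_invOf_self, one_mul]; rfl
  rw [h2, h]
  split <;> simp

lemma pairB_irr {χ ψ : G → ℂ} (hχ : χ ∈ Irr G) (hψ : ψ ∈ Irr G) :
    pairB χ ψ = if χ = ψ then (Fintype.card G : ℂ) else 0 := by
  obtain ⟨V, hV, rfl⟩ := hχ
  obtain ⟨W, hW, rfl⟩ := hψ
  haveI := hV; haveI := hW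
  by_cases hchar : V.character = W.character
  · rw [if_pos hchar, ← hchar, char_orth V V,
      if_pos ⟨CategoryTheory.Iso.refl V⟩]
  · rw [if_neg hchar, char_orth V W, if_neg (fun ⟨i⟩ => hchar (FDRep.char_iso i))]

lemma pairB_linearIndependent {ι : Type} {v : ι → G → ℂ}
    (h0 : ∀ i, pairB (v i) (v i) ≠ 0)
    (horth : ∀ i j, i ≠ j → pairB (v i) (v j) = 0) :
    LinearIndependent ℂ v := by
  rw [linearIndependent_iff']
  intro s c hsum i hi
  have h1 : pairB (∑ j ∈ s, c j • v j) (v i) = 0 := by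
    rw [hsum]; simp [pairB]
  have h2 : pairB (∑ j ∈ s, c j • v j) (v i) = ∑ j ∈ s, c j * pairB (v j) (v i) := by
    simp only [pairB, Finset.sum_apply, Pi.smul_apply, smul_eq_mul, Finset.sum_mul]
    rw [Finset.sum_comm]
    refine Finset.sum_congr rfl fun j _ => ?_
    rw [Finset.mul_sum]
    exact Finset.sum_congr rfl fun g _ => by ring
  rw [h2, Finset.sum_eq_single i (fun j _ hne => by rw [horth j i hne, mul_zero])
    (fun h => absurd hi h)] at h1
  exact (mul_eq_zero.mp h1).resolve_right (h0 i)

lemma Irr_finite : (Irr G).Finite := by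
  have hli : LinearIndependent ℂ (fun χ : Irr G => (χ : G → ℂ)) :=
    pairB_linearIndependent
      (fun i => by
        rw [pairB_irr i.2 i.2, if_pos rfl]
        exact_mod_cast Fintype.card_ne_zero)
      (fun i j hij => by
        rw [pairB_irr i.2 j.2, if_neg (fun h => hij (Subtype.ext h))])
  exact hli.setFinite

lemma irr_one_pos {χ : G → ℂ} (hχ : χ ∈ Irr G) : ∃ n : ℕ, 0 < n ∧ χ 1 = n := by
  obtain ⟨V, hV, rfl⟩ := hχ
  haveI := hV
  refine ⟨Module.finrank ℂ V, ?_, by exact_mod_cast V.char_one⟩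
  by_contra h
  push_neg at h
  have h0 : Module.finrank ℂ V = 0 := Nat.le_zero.mp (Nat.lt_succ_iff.mp (Nat.lt_succ_of_le h))
  haveI hsub : Subsingleton V := Module.finrank_zero_iff.mp h0
  have hz : V.character = fun _ => 0 := by
    funext g
    show LinearMap.trace ℂ _ (V.ρ g) = 0
    rw [Subsingleton.elim (V.ρ g) 0, map_zero]
  have hp := char_orth V V
  rw [if_pos ⟨CategoryTheory.Iso.refl V⟩, hz] at hp
  simp only [pairB, zero_mul, Finset.sum_const_zero] at hp
  exact (Nat.cast_ne_zero (R := ℂ)).mpr Fintype.card_ne_zero hp.symm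

lemma wsum_eq {X : Set (G → ℂ)} (hX : X.Finite) (g : G) :
    wsum X g = ∑ χ ∈ hX.toFinset, χ 1 * χ g := by
  rw [wsum, ← finsum_mem_coe_finset, hX.coe_toFinset]

lemma pairB_wsum {X X' : Set (G → ℂ)} (hX : X.Finite) (hX' : X'.Finite) :
    pairB (wsum X) (wsum X')
      = ∑ χ ∈ hX.toFinset, ∑ ψ ∈ hX'.toFinset, (χ 1 * ψ 1) * pairB χ ψ := by
  unfold pairB
  simp only [wsum_eq hX, wsum_eq hX', Finset.sum_mul_sum]
  rw [Finset.sum_comm]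
  refine Finset.sum_congr rfl fun χ _ => ?_
  rw [Finset.sum_comm]
  refine Finset.sum_congr rfl fun ψ _ => ?_
  rw [Finset.mul_sum]
  exact Finset.sum_congr rfl fun g _ => by ring

/-- A total "degree" function agreeing with `χ 1` on `Irr G`. -/
noncomputable def degC (χ : G → ℂ) : ℕ :=
  if h : ∃ n : ℕ, 0 < n ∧ χ 1 = (n : ℂ) then h.choose else 1

lemma degC_spec {χ : G → ℂ} (hχ : χ ∈ Irr G) : 0 < degC χ ∧ χ 1 = degC χ := by
  have h := irr_one_pos hχ
  rw [degC, dif_pos h]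
  exact h.choose_spec

end Aux

/-- Functions constant on each member of `K`. -/
noncomputable def constOn (G : Type) [Group G] [Fintype G] (K : Set (Set G)) : Submodule ℂ (G → ℂ) where
  carrier := {f | ∀ k ∈ K, ∀ g ∈ k, ∀ h ∈ k, f g = f h}
  add_mem' := fun hf hg k hk x hx y hy => by
    simp only [Pi.add_apply, hf k hk x hx y hy, hg k hk x hx y hy]
  zero_mem' := fun k hk x hx y hy => rfl
  smul_mem' := fun c f hf k hk x hx y hy => by
    simp only [Pi.smul_apply, hf k hk x hx y hy]

lemma constOn_mul_mem {G : Type} [Group G] [Fintype G] {K : Set (Set G)} {f g : G → ℂ}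
    (hf : f ∈ constOn G K) (hg : g ∈ constOn G K) : f * g ∈ constOn G K :=
  fun k hk x hx y hy => by
    simp only [Pi.mul_apply, hf k hk x hx y hy, hg k hk x hx y hy]

lemma finrank_constOn_le {G : Type} [Group G] [Fintype G] {K : Set (Set G)}
    (hK : IsPartitionOf (Set.univ : Set G) K) :
    Module.finrank ℂ (constOn G K) ≤ K.ncard := by
  haveI : Fintype ↥K := (Set.toFinite K).fintype
  set rep : ↥K → G := fun k => ((hK.1 k k.2).1).some with hrepdef
  have hrep : ∀ k : ↥K, rep k ∈ (k : Set G) := fun k => ((hK.1 k k.2).1).some_mem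
  let L : constOn G K →ₗ[ℂ] (↥K → ℂ) :=
    { toFun := fun f k => (f : G → ℂ) (rep k)
      map_add' := fun f g => rfl
      map_smul' := fun c f => rfl }
  have hinj : Function.Injective L := by
    intro f g hfg
    apply Subtype.ext
    funext x
    obtain ⟨p, ⟨hpK, hxp⟩, -⟩ := hK.2 x (Set.mem_univ x)
    have h1 := f.2 p hpK x hxp (rep ⟨p, hpK⟩) (hrep ⟨p, hpK⟩)
    have h2 := g.2 p hpK x hxp (rep ⟨p, hpK⟩) (hrep ⟨p, hpK⟩)
    have h3 : L f ⟨p, hpK⟩ = L g ⟨p, hpK⟩ := congrFun hfg ⟨p, hpK⟩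
    calc (f : G → ℂ) x = (f : G → ℂ) (rep ⟨p, hpK⟩) := h1
      _ = (g : G → ℂ) (rep ⟨p, hpK⟩) := h3
      _ = (g : G → ℂ) x := h2.symm
  calc Module.finrank ℂ (constOn G K) ≤ Module.finrank ℂ (↥K → ℂ) :=
        LinearMap.finrank_le_finrank_of_injective hinj
    _ = Fintype.card ↥K := Module.finrank_pi ℂ
    _ = K.ncard := by rw [← Nat.card_coe_set_eq, Nat.card_eq_fintype_card]

/-- for a supercharacter theory `(Y, K)` of `G`, every element of the
subalgebra of `cf(G)` generated by the Wedderburn sums `{σ_X : X ∈ Y}` lies in the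
linear span of `{σ_X : X ∈ Y}`. -/
theorem stmt6 (G : Type) [Group G] [Fintype G] (Y : Set (Set (G → ℂ))) (K : Set (Set G))
    (hsct : IsSCT G Y K) :
    ∀ a ∈ wAlg G Y, a ∈ Submodule.span ℂ {s | ∃ X ∈ Y, s = wsum X} := by
  classical
  obtain ⟨hY, hK, hK1, hcard, hconst⟩ := hsct
  have hIrrFin : (Irr G).Finite := Irr_finite
  have hfin : ∀ X ∈ Y, X.Finite := fun X hX => hIrrFin.subset (hY.1 X hX).2
  have hdisj : ∀ X ∈ Y, ∀ X' ∈ Y, X ≠ X' → ∀ χ ∈ X, χ ∉ X' := by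
    intro X hX X' hX' hne χ hχ hχ'
    obtain ⟨p, -, hp⟩ := hY.2 χ ((hY.1 X hX).2 hχ)
    exact hne ((hp X ⟨hX, hχ⟩).trans (hp X' ⟨hX', hχ'⟩).symm)
  have horth : ∀ X ∈ Y, ∀ X' ∈ Y, X ≠ X' → pairB (wsum X) (wsum X') = 0 := by
    intro X hX X' hX' hne
    rw [pairB_wsum (hfin X hX) (hfin X' hX')]
    refine Finset.sum_eq_zero fun χ hχ => Finset.sum_eq_zero fun ψ hψ => ?_
    rw [Set.Finite.mem_toFinset] at hχ hψ
    have hχψ : χ ≠ ψ := fun h => hdisj X hX X' hX' hne χ hχ (h ▸ hψ)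
    rw [pairB_irr ((hY.1 X hX).2 hχ) ((hY.1 X' hX').2 hψ), if_neg hχψ, mul_zero]
  have hdiag : ∀ X ∈ Y, pairB (wsum X) (wsum X) ≠ 0 := by
    intro X hX
    have hsub := (hY.1 X hX).2
    have hXf := hfin X hX
    have hcalc : pairB (wsum X) (wsum X)
        = (Fintype.card G : ℂ) * ((∑ χ ∈ hXf.toFinset, degC χ * degC χ : ℕ) : ℂ) := by
      rw [pairB_wsum hXf hXf, Nat.cast_sum, Finset.mul_sum]
      refine Finset.sum_congr rfl fun χ hχ => ?_
      rw [Set.Finite.mem_toFinset] at hχ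
      have hstep : ∀ ψ ∈ hXf.toFinset, (χ 1 * ψ 1) * pairB χ ψ
          = if χ = ψ then (χ 1 * ψ 1) * (Fintype.card G : ℂ) else 0 := by
        intro ψ hψ
        rw [Set.Finite.mem_toFinset] at hψ
        rw [pairB_irr (hsub hχ) (hsub hψ)]
        split <;> simp
      rw [Finset.sum_congr rfl hstep, Finset.sum_ite_eq hXf.toFinset χ
        (fun ψ => (χ 1 * ψ 1) * (Fintype.card G : ℂ)),
        if_pos ((Set.Finite.mem_toFinset _).mpr hχ)]
      rw [(degC_spec (hsub hχ)).2]
      push_cast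
      ring
    rw [hcalc]
    refine mul_ne_zero (by exact_mod_cast Fintype.card_ne_zero) ?_
    rw [Nat.cast_ne_zero]
    obtain ⟨χ0, hχ0⟩ := (hY.1 X hX).1
    have hpos : 0 < ∑ χ ∈ hXf.toFinset, degC χ * degC χ :=
      Finset.sum_pos' (fun _ _ => Nat.zero_le _)
        ⟨χ0, (Set.Finite.mem_toFinset _).mpr hχ0,
          Nat.mul_pos (degC_spec (hsub hχ0)).1 (degC_spec (hsub hχ0)).1⟩
    omega
  have hli : LinearIndependent ℂ (fun X : Y => wsum (X : Set (G → ℂ))) :=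
    pairB_linearIndependent (fun i => hdiag i i.2)
      (fun i j hij => horth i i.2 j j.2 (fun h => hij (Subtype.ext h)))
  have hinjOn : Set.InjOn wsum Y := by
    intro X hX X' hX' h
    by_contra hne
    have h0 := horth X hX X' hX' hne
    rw [← h] at h0
    exact hdiag X hX h0
  have hSet : {s | ∃ X ∈ Y, s = wsum X} = wsum '' Y := by
    ext s
    constructor
    · rintro ⟨X, hX, rfl⟩; exact ⟨X, hX, rfl⟩
    · rintro ⟨X, hX, rfl⟩; exact ⟨X, hX, rfl⟩
  have hYfin : Y.Finite := hIrrFin.finite_subsets.subset fun X hX => (hY.1 X hX).2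
  have hSfin : (wsum '' Y).Finite := hYfin.image wsum
  haveI : Fintype ↥(wsum '' Y) := hSfin.fintype
  have hfr : Module.finrank ℂ (Submodule.span ℂ (wsum '' Y)) = K.ncard := by
    rw [finrank_span_set_eq_card (LinearIndepOn.id_image (R := ℂ) (v := wsum) (s := Y) hli), ← Set.ncard_eq_toFinset_card',
      Set.ncard_image_of_injOn hinjOn]
    exact hcard
  have hle : Submodule.span ℂ (wsum '' Y) ≤ constOn G K := by
    rw [Submodule.span_le]
    rintro s ⟨X, hX, rfl⟩
    exact fun k hk g hg h hh => hconst X hX k hk g hg h hh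
  have heq : Submodule.span ℂ (wsum '' Y) = constOn G K := by
    apply Submodule.eq_of_le_of_finrank_le hle
    rw [hfr]
    exact finrank_constOn_le hK
  intro a ha
  rw [hSet]
  induction ha using NonUnitalAlgebra.adjoin_induction with
  | mem x hx => exact Submodule.subset_span (hSet ▸ hx)
  | add x y _ _ hx hy => exact Submodule.add_mem _ hx hy
  | zero => exact Submodule.zero_mem _
  | mul x y _ _ hx hy =>
      rw [heq] at hx hy ⊢
      exact constOn_mul_mem hx hy
  | smul r x _ hx => exact Submodule.smul_mem _ r hx
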